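/- For all integers n ≥ 1, (1 + 1/n)^α ≤ Ω_n²/(Ω_{n-1} Ω_{n+1}) ≤ (1 + 1/n)^(1/2), where α = 2 - (log π)/log 2, and these exponents are best possible. -/

import Mathlib

open Real

/-- The volume of the unit ball in ℝⁿ. -/
noncomputable def unitBallVolume (n : ℕ) : ℝ := π ^ ((n : ℝ) / 2) / Real.Gamma ((n : ℝ) / 2 + 1)

open Filter
open scoped Topology

noncomputable def hs (n : ℕ) : ℝ := (Real.Gamma ((n:ℝ)/2 + 1) / Real.Gamma ((n:ℝ)/2 + 1/2))^2

lemma gpos1 (n : ℕ) : 0 < Real.Gamma ((n:ℝ)/2 + 1) := Real.Gamma_pos_of_pos (by positivity)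
lemma gpos2 (n : ℕ) : 0 < Real.Gamma ((n:ℝ)/2 + 1/2) := Real.Gamma_pos_of_pos (by positivity)
lemma hs_pos (n : ℕ) : 0 < hs n := by
  have h1 := gpos1 n; have h2 := gpos2 n
  exact pow_pos (div_pos h1 h2) 2

lemma hs_zero : hs 0 = 1/π := by
  have h2 : Real.Gamma ((0:ℕ):ℝ)/2 = 0 := by norm_num [Real.Gamma_zero]
  simp only [hs]
  norm_num [Real.Gamma_one, Real.Gamma_one_half_eq]
  rw [sq_sqrt pi_pos.le]

lemma hs_succ (n : ℕ) : hs (n+1) * hs n = (((n:ℝ)+1)/2)^2 := by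
  have e1 : ((n:ℝ)+1)/2 + 1 = ((n:ℝ)/2 + 1/2) + 1 := by ring
  have e2 : ((n:ℝ)+1)/2 + 1/2 = (n:ℝ)/2 + 1 := by ring
  have hne : ((n:ℝ)/2 + 1/2) ≠ 0 := by positivity
  have g1 := gpos1 n; have g2 := gpos2 n
  simp only [hs]
  push_cast
  rw [e1, e2, Real.Gamma_add_one hne]
  field_simp

lemma hs_even_succ (m : ℕ) : hs (2*(m+1)) * ((2*(m:ℝ)+1)^2) = 4*((m:ℝ)+1)^2 * hs (2*m) := by
  have h1 := hs_succ (2*m)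
  have h2 := hs_succ (2*m+1)
  have hp := hs_pos (2*m)
  have hp1 := hs_pos (2*m+1)
  have e : 2*(m+1) = (2*m+1)+1 := by ring
  rw [e]
  push_cast at h1 h2 ⊢
  nlinarith [hp.le, hp1.le]

lemma pi_hs_even (m : ℕ) : π * hs (2*m) = (2*(m:ℝ)+1) * Real.Wallis.W m := by
  induction m with
  | zero => simp [hs_zero, Real.Wallis.W, pi_pos.ne']
  | succ m ih =>
    have h := hs_even_succ m
    have hW := Real.Wallis.W_succ m
    have h1 : ((2*(m:ℝ)+1)) ≠ 0 := by positivity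
    have h3 : ((2*(m:ℝ)+3)) ≠ 0 := by positivity
    have hW' : (Real.Wallis.W (m+1)) * ((2*(m:ℝ)+1)*(2*(m:ℝ)+3)) = Real.Wallis.W m * (2*(m:ℝ)+2)^2 := by
      rw [hW]; field_simp
    have hc : ((2*(m:ℝ)+1)^2*(2*(m:ℝ)+3)) ≠ 0 := by positivity
    have key : π * hs (2*(m+1)) * ((2*(m:ℝ)+1)^2*(2*(m:ℝ)+3)) =
        (2*((m:ℝ)+1)+1) * Real.Wallis.W (m+1) * ((2*(m:ℝ)+1)^2*(2*(m:ℝ)+3)) := by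
      linear_combination (2*(m:ℝ)+3)*π*h + (4*((m:ℝ)+1)^2*(2*(m:ℝ)+3))*ih
        - ((2*(m:ℝ)+3)*(2*(m:ℝ)+1))*hW'
    have := mul_right_cancel₀ hc key
    push_cast
    push_cast at this
    linarith [this]

lemma hs_one : hs 1 = π/4 := by
  have h := hs_succ 0
  rw [hs_zero] at h
  push_cast at h
  have hπ := pi_pos
  field_simp at h
  linarith

lemma hs_two : hs 2 = 4/π := by
  have h := hs_succ 1
  rw [hs_one] at h
  push_cast at h
  have hπ := pi_pos
  rw [eq_div_iff hπ.ne']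
  nlinarith [h]

lemma hs_three : hs 3 = 9*π/16 := by
  have h := hs_succ 2
  rw [hs_two] at h
  push_cast at h
  have hπ := pi_pos
  have h4 : (4:ℝ)/π > 0 := by positivity
  field_simp at h
  nlinarith [h]

noncomputable def g (m : ℕ) : ℝ := hs (2*m) / ((m:ℝ) + 1/4)

lemma g_pos (m : ℕ) : 0 < g m := div_pos (hs_pos _) (by positivity)

lemma hs_even_eq (m : ℕ) : hs (2*m) = (2*(m:ℝ)+1) * Real.Wallis.W m / π := by
  rw [eq_div_iff pi_pos.ne']; linarith [pi_hs_even m]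

lemma hs_even_succ' (m : ℕ) :
    hs (2*(m+1)) = 4*((m:ℝ)+1)^2 * hs (2*m) / (2*(m:ℝ)+1)^2 := by
  rw [eq_div_iff (by positivity)]; linarith [hs_even_succ m]

lemma tendsto_g : Tendsto g atTop (𝓝 1) := by
  have h1 : ∀ m : ℕ, g m = Real.Wallis.W m * ((2*(m:ℝ)+1) / ((m:ℝ)+1/4)) / π := by
    intro m
    have hp : (0:ℝ) < (m:ℝ) + 1/4 := by positivity
    rw [g, hs_even_eq m]
    field_simp
  have hW := Real.Wallis.tendsto_W_nhds_pi_div_two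
  have h2 : Tendsto (fun m : ℕ => (2*(m:ℝ)+1) / ((m:ℝ)+1/4)) atTop (𝓝 2) := by
    have e : ∀ m : ℕ, (2*(m:ℝ)+1) / ((m:ℝ)+1/4) = 2 + (1/2) / ((m:ℝ)+1/4) := by
      intro m; have hp : (0:ℝ) < (m:ℝ) + 1/4 := by positivity
      field_simp; ring
    simp only [funext e]
    have ht : Tendsto (fun m : ℕ => ((m:ℝ)+1/4)) atTop atTop :=
      tendsto_atTop_add_const_right _ _ tendsto_natCast_atTop_atTop
    have h0 : Tendsto (fun m : ℕ => (1/2) / ((m:ℝ)+1/4)) atTop (𝓝 0) :=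
      Tendsto.div_atTop tendsto_const_nhds ht
    simpa using tendsto_const_nhds.add h0
  have hfin := (hW.mul h2).div_const π
  have e2 : π / 2 * 2 / π = 1 := by field_simp
  rw [e2] at hfin
  simp only [funext h1]
  exact hfin

lemma g_antitone : Antitone g := by
  apply antitone_nat_of_succ_le
  intro m
  have hp := hs_pos (2*m)
  have hp1 : (0:ℝ) < (m:ℝ) + 1/4 := by positivity
  simp only [g]
  rw [hs_even_succ' m]
  push_cast
  rw [div_div, div_le_div_iff₀ (by positivity) hp1]
  nlinarith [hp.le]

lemma g_ge_one (m : ℕ) : 1 ≤ g m := g_antitone.le_of_tendsto tendsto_g m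

lemma g_one : g 1 = 16/(5*π) := by
  have : (2*1 : ℕ) = 2 := rfl
  simp only [g, this, hs_two]
  norm_num
  rw [div_div_eq_mul_div]
  ring_nf

lemma g_le_start (m : ℕ) (hm : 1 ≤ m) : g m ≤ 16/15 := by
  have h := g_antitone hm
  rw [g_one] at h
  have h2 : (16:ℝ)/(5*π) ≤ 16/15 := by
    rw [div_le_div_iff₀ (by positivity) (by norm_num)]
    nlinarith [pi_gt_three]
  linarith

lemma g_diff (k : ℕ) : (g k - g (k+1)) * ((2*(k:ℝ)+1)^2 * (4*(k:ℝ)+5)) = g k := by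
  have hp1 : (0:ℝ) < (k:ℝ) + 1/4 := by positivity
  have hp2 : ((k:ℝ)+1) + 1/4 ≠ 0 := by positivity
  simp only [g]
  rw [hs_even_succ' k]
  push_cast
  field_simp
  ring

lemma step_ineq (k : ℕ) (hk : 1 ≤ k) :
    g k - g (k+1) ≤ (1/25)/((k:ℝ)*((k:ℝ)+1)) - (1/25)/(((k:ℝ)+1)*((k:ℝ)+2)) := by
  have hd := g_diff k
  have hgub := g_le_start k hk
  have hgpos := g_pos k
  have hkr : (1:ℝ) ≤ (k:ℝ) := by exact_mod_cast hk
  have hz : (0:ℝ) < (2*(k:ℝ)+1)^2 * (4*(k:ℝ)+5) := by positivity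
  have e : (1/25)/((k:ℝ)*((k:ℝ)+1)) - (1/25)/(((k:ℝ)+1)*((k:ℝ)+2)) =
      (2/25) / ((k:ℝ)*((k:ℝ)+1)*((k:ℝ)+2)) := by
    field_simp
    ring
  rw [e]
  have hdq : g k - g (k+1) = g k / ((2*(k:ℝ)+1)^2 * (4*(k:ℝ)+5)) := by
    rw [eq_div_iff hz.ne']; exact hd
  rw [hdq, div_le_div_iff₀ hz (by positivity)]
  nlinarith [hgub, hgpos.le, hkr, mul_nonneg (sub_nonneg.2 hkr) (sq_nonneg (3*(k:ℝ)-4)),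
    mul_nonneg (mul_nonneg (sub_nonneg.2 hkr) (sub_nonneg.2 hkr)) (sub_nonneg.2 hkr)]

noncomputable def G (m : ℕ) : ℝ := g (m+1) - (1/25)/(((m:ℝ)+1)*((m:ℝ)+2))

lemma G_monotone : Monotone G := by
  apply monotone_nat_of_le_succ
  intro m
  have h := step_ineq (m+1) (Nat.le_add_left 1 m)
  simp only [G]
  push_cast at h ⊢
  ring_nf at h ⊢
  linarith

lemma tendsto_G : Tendsto G atTop (𝓝 1) := by
  have h1 : Tendsto (fun m : ℕ => g (m+1)) atTop (𝓝 1) :=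
    tendsto_g.comp (tendsto_add_atTop_nat 1)
  have h2 : Tendsto (fun m : ℕ => (1/25)/(((m:ℝ)+1)*((m:ℝ)+2))) atTop (𝓝 0) := by
    apply Tendsto.div_atTop tendsto_const_nhds
    have hnat := tendsto_natCast_atTop_atTop (R := ℝ)
    exact (tendsto_atTop_add_const_right _ 1 hnat).atTop_mul_atTop₀
      (tendsto_atTop_add_const_right _ 2 hnat)
  have e : G = fun m : ℕ => g (m+1) - (1/25)/(((m:ℝ)+1)*((m:ℝ)+2)) := rfl
  rw [e]
  simpa [one_div] using h1.sub h2

lemma g_le (m : ℕ) (hm : 1 ≤ m) : g m ≤ 1 + (1/25)/((m:ℝ)*((m:ℝ)+1)) := by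
  cases m with
  | zero => omega
  | succ k =>
    have := G_monotone.ge_of_tendsto tendsto_G k
    simp only [G] at this
    push_cast at this ⊢
    ring_nf at this ⊢
    linarith

lemma hs_even_g (m : ℕ) : hs (2*m) = g m * ((m:ℝ)+1/4) := by
  rw [g, div_mul_cancel₀]
  positivity

-- L1 : lower bound
lemma L1 (n : ℕ) (hn : 1 ≤ n) : (2*(n:ℝ)+1)/4 ≤ hs n := by
  rcases Nat.even_or_odd n with ⟨m, hm⟩ | ⟨k, hk⟩
  · have hm1 : 1 ≤ m := by omega
    have e : n = 2*m := by omega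
    subst e
    rw [hs_even_g]
    have := g_ge_one m
    have hp : (0:ℝ) < (m:ℝ)+1/4 := by positivity
    push_cast
    nlinarith
  · have e : n = 2*k+1 := by omega
    subst e
    have hrec := hs_succ (2*k+1)
    have heq : (2*k+1)+1 = 2*(k+1) := by ring
    rw [heq] at hrec
    have hg := g_le (k+1) (by omega)
    have hgpos : (0:ℝ) < g (k+1) := lt_of_lt_of_le one_pos (g_ge_one (k+1))
    have h2 := hs_even_g (k+1)
    have hp := hs_pos (2*k+1)
    have hp2 := hs_pos (2*(k+1))
    have hK : (0:ℝ) ≤ (k:ℝ) := Nat.cast_nonneg k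
    push_cast at hrec hg h2 ⊢
    have hKK : (0:ℝ) < ((k:ℝ)+1)*((k:ℝ)+1+1) := by positivity
    have hp3 : (0:ℝ) < (k:ℝ)+1+1/4 := by positivity
    have hub : hs (2*(k+1)) ≤ (1 + (1/25)/(((k:ℝ)+1)*((k:ℝ)+1+1))) * ((k:ℝ)+1+1/4) := by
      rw [h2]
      exact mul_le_mul_of_nonneg_right hg hp3.le
    have key : ((k:ℝ) + 3/4) * hs (2*(k+1)) ≤ ((k:ℝ)+1)^2 := by
      have step : ((k:ℝ) + 3/4) * hs (2*(k+1)) ≤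
          ((k:ℝ) + 3/4) * ((1 + (1/25)/(((k:ℝ)+1)*((k:ℝ)+1+1))) * ((k:ℝ)+1+1/4)) :=
        mul_le_mul_of_nonneg_left hub (by linarith)
      refine step.trans ?_
      have expand : ((k:ℝ) + 3/4) * ((1 + (1/25)/(((k:ℝ)+1)*((k:ℝ)+1+1))) * ((k:ℝ)+1+1/4)) =
          ((k:ℝ)+3/4)*((k:ℝ)+5/4) + ((k:ℝ)+3/4)*((k:ℝ)+5/4)*(1/25)/(((k:ℝ)+1)*((k:ℝ)+1+1)) := by
        ring
      rw [expand]
      have hfrac : ((k:ℝ)+3/4)*((k:ℝ)+5/4)*(1/25)/(((k:ℝ)+1)*((k:ℝ)+1+1)) ≤ 1/16 := by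
        rw [div_le_iff₀ hKK]
        nlinarith [hK]
      nlinarith [hfrac]
    nlinarith [hrec, key, hp2]

-- L2 : upper bound
lemma L2 (n : ℕ) (hn : 1 ≤ n) : hs n ≤ (2*(n:ℝ)+1)/4 + 1/(8*(n:ℝ)) := by
  rcases Nat.even_or_odd n with ⟨m, hm⟩ | ⟨k, hk⟩
  · have hm1 : 1 ≤ m := by omega
    have e : n = 2*m := by omega
    subst e
    rw [hs_even_g]
    have hg := g_le m hm1
    have hM : (1:ℝ) ≤ (m:ℝ) := by exact_mod_cast hm1
    have hp : (0:ℝ) < (m:ℝ)+1/4 := by positivity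
    have hKK : (0:ℝ) < (m:ℝ)*((m:ℝ)+1) := by positivity
    push_cast
    have step : g m * ((m:ℝ)+1/4) ≤ (1 + (1/25)/((m:ℝ)*((m:ℝ)+1))) * ((m:ℝ)+1/4) :=
      mul_le_mul_of_nonneg_right hg hp.le
    refine step.trans ?_
    have expand : (1 + (1/25)/((m:ℝ)*((m:ℝ)+1))) * ((m:ℝ)+1/4) =
        ((m:ℝ)+1/4) + ((m:ℝ)+1/4)*(1/25)/((m:ℝ)*((m:ℝ)+1)) := by ring
    rw [expand]
    have hfrac : ((m:ℝ)+1/4)*(1/25)/((m:ℝ)*((m:ℝ)+1)) ≤ 1/(8*(2*(m:ℝ))) := by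
      rw [div_le_div_iff₀ hKK (by positivity)]
      nlinarith [hM]
    nlinarith [hfrac]
  · have e : n = 2*k+1 := by omega
    subst e
    have hrec := hs_succ (2*k+1)
    have heq : (2*k+1)+1 = 2*(k+1) := by ring
    rw [heq] at hrec
    have hlb : ((k:ℝ)+1) + 1/4 ≤ hs (2*(k+1)) := by
      rw [hs_even_g]
      have := g_ge_one (k+1)
      have hp : (0:ℝ) < ((k:ℕ):ℝ)+1+1/4 := by positivity
      push_cast
      nlinarith
    have hp := hs_pos (2*k+1)
    have hp2 := hs_pos (2*(k+1))
    have hK : (0:ℝ) ≤ (k:ℝ) := Nat.cast_nonneg k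
    push_cast at hrec ⊢
    have h1 : hs (2*k+1) * ((k:ℝ)+5/4) ≤ ((k:ℝ)+1)^2 := by
      nlinarith [hrec, mul_le_mul_of_nonneg_left hlb hp.le]
    have erw : (2*(2*(k:ℝ)+1)+1)/4 + 1/(8*(2*(k:ℝ)+1)) =
        ((k:ℝ)+3/4) + 1/(16*(k:ℝ)+8) := by
      field_simp
      ring
    rw [erw]
    have h2 : hs (2*k+1) * (16*(k:ℝ)+8) ≤ (((k:ℝ)+3/4) + 1/(16*(k:ℝ)+8)) * (16*(k:ℝ)+8) := by
      have expand2 : (((k:ℝ)+3/4) + 1/(16*(k:ℝ)+8)) * (16*(k:ℝ)+8) =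
          ((k:ℝ)+3/4)*(16*(k:ℝ)+8) + 1 := by
        field_simp
      rw [expand2]
      nlinarith [h1, hp]
    have hpos8 : (0:ℝ) < 16*(k:ℝ)+8 := by positivity
    nlinarith [h2]

lemma exp_7th : Real.exp 0.1396 ≤ 1.15 := by
  have hb := Real.exp_bound (x := 0.1396) (by rw [abs_of_nonneg] <;> norm_num) (n := 3) (by norm_num)
  rw [abs_le] at hb
  have h2 := hb.2
  simp [Finset.sum_range_succ, Nat.factorial] at h2 ⊢
  rw [abs_of_nonneg (by norm_num : (0.1396:ℝ) ≥ 0)] at h2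
  norm_num at h2 ⊢
  linarith
lemma log_pi_gt : 1.1396 < Real.log π := by
  rw [Real.lt_log_iff_exp_lt pi_pos]
  have : Real.exp 1.1396 = Real.exp 1 * Real.exp 0.1396 := by
    rw [← Real.exp_add]; norm_num
  rw [this]
  have h1 := Real.exp_one_lt_d9
  have h2 := exp_7th
  have hp := Real.exp_pos (0.1396:ℝ)
  nlinarith [pi_gt_d6]
lemma log_pi_lt : Real.log π < 2 * Real.log 2 := by
  have : 2 * Real.log 2 = Real.log 4 := by
    rw [show (4:ℝ) = 2^2 by norm_num, Real.log_pow]; push_cast; ring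
  rw [this]
  exact Real.log_lt_log pi_pos pi_lt_four
lemma log_pi_ge_log_two : Real.log 2 ≤ Real.log π :=
  Real.log_le_log two_pos (by nlinarith [pi_gt_three])

lemma alpha_nonneg : 0 ≤ 2 - Real.log π / Real.log 2 := by
  have h2 := Real.log_pos (by norm_num : (1:ℝ) < 2)
  rw [sub_nonneg, div_le_iff₀ h2]
  linarith [log_pi_lt]
lemma alpha_le_one : 2 - Real.log π / Real.log 2 ≤ 1 := by
  have h2 := Real.log_pos (by norm_num : (1:ℝ) < 2)
  rw [sub_le_iff_le_add, ← sub_le_iff_le_add', le_div_iff₀ h2]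
  nlinarith [log_pi_ge_log_two]
lemma alpha_le : 2 - Real.log π / Real.log 2 ≤ 0.356 := by
  have h2 := Real.log_pos (by norm_num : (1:ℝ) < 2)
  have hl2 := Real.log_two_lt_d9
  have hlp := log_pi_gt
  rw [sub_le_iff_le_add, ← sub_le_iff_le_add', le_div_iff₀ h2]
  nlinarith

lemma rV (n : ℕ) (hn : 1 ≤ n) :
    unitBallVolume n ^ 2 / (unitBallVolume (n-1) * unitBallVolume (n+1)) =
      (((n:ℝ)+1)/2) / hs n := by
  obtain ⟨k, rfl⟩ : ∃ k, n = k + 1 := ⟨n - 1, by omega⟩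
  have hsub : (k + 1 - 1 : ℕ) = k := rfl
  rw [hsub]
  set y : ℝ := (k:ℝ)/2 with hy
  have e1 : ((k+1:ℕ):ℝ)/2 + 1 = y + 3/2 := by push_cast; ring
  have e1' : ((k+1:ℕ):ℝ)/2 + 1/2 = y + 1 := by push_cast; ring
  have e2 : ((k:ℕ):ℝ)/2 + 1 = y + 1 := by push_cast; ring
  have e3 : ((k+1+1:ℕ):ℝ)/2 + 1 = (y + 1) + 1 := by push_cast; ring
  have g1 : 0 < Real.Gamma (y + 3/2) := Real.Gamma_pos_of_pos (by positivity)
  have g2 : 0 < Real.Gamma (y + 1) := Real.Gamma_pos_of_pos (by positivity)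
  have hGadd : Real.Gamma ((y+1)+1) = (y+1) * Real.Gamma (y+1) :=
    Real.Gamma_add_one (by positivity)
  have hpow : (π ^ (((k+1:ℕ):ℝ)/2))^2 = π ^ (((k:ℕ):ℝ)/2) * π ^ (((k+1+1:ℕ):ℝ)/2) := by
    rw [sq, ← Real.rpow_add pi_pos, ← Real.rpow_add pi_pos]
    norm_num
    push_cast
    ring_nf
  have hppos : (0:ℝ) < π ^ (((k:ℕ):ℝ)/2) := Real.rpow_pos_of_pos pi_pos _
  have hppos2 : (0:ℝ) < π ^ (((k+1+1:ℕ):ℝ)/2) := Real.rpow_pos_of_pos pi_pos _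
  have hppos1 : (0:ℝ) < π ^ (((k+1:ℕ):ℝ)/2) := Real.rpow_pos_of_pos pi_pos _
  rw [unitBallVolume, unitBallVolume, unitBallVolume, hs, e1, e1', e2, e3, hGadd]
  rw [div_pow]
  rw [hpow]
  field_simp
  simp only [hy]; push_cast; ring

lemma L2' (n : ℕ) (hn : 3 ≤ n) : hs n ≤ (n:ℝ)/2 + π/4 - 1/2 := by
  rcases eq_or_lt_of_le hn with h3 | h4
  · rw [← h3, hs_three]
    have := pi_lt_d2
    norm_num
    linarith
  · have hn4 : 4 ≤ n := h4
    have hN : (4:ℝ) ≤ (n:ℝ) := by exact_mod_cast hn4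
    have h := L2 n (by omega)
    have h8 : 1/(8*(n:ℝ)) ≤ 1/32 := by
      rw [div_le_div_iff₀ (by positivity) (by norm_num)]
      linarith
    have hπ := pi_gt_d6
    have : (2*(n:ℝ)+1)/4 + 1/32 ≤ (n:ℝ)/2 + π/4 - 1/2 := by
      nlinarith
    linarith

lemma two_rpow_alpha : (2:ℝ) ^ (2 - Real.log π / Real.log 2) = 4/π := by
  have hlb : Real.log π / Real.log 2 = Real.logb 2 π := rfl
  rw [sub_eq_add_neg, Real.rpow_add two_pos, Real.rpow_neg (by norm_num), hlb,
    Real.rpow_logb two_pos (by norm_num) pi_pos]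
  norm_num [Real.rpow_two]
  rw [div_eq_mul_inv]

set_option maxHeartbeats 2000000 in
theorem alzer_ball_logconvexity :
    (∀ n : ℕ, 1 ≤ n →
      (1 + 1 / (n : ℝ)) ^ (2 - Real.log π / Real.log 2) ≤
        unitBallVolume n ^ 2 / (unitBallVolume (n - 1) * unitBallVolume (n + 1)) ∧
      unitBallVolume n ^ 2 / (unitBallVolume (n - 1) * unitBallVolume (n + 1)) ≤
        (1 + 1 / (n : ℝ)) ^ ((1 : ℝ) / 2)) ∧
    (∀ α : ℝ, (∀ n : ℕ, 1 ≤ n →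
        (1 + 1 / (n : ℝ)) ^ α ≤
          unitBallVolume n ^ 2 / (unitBallVolume (n - 1) * unitBallVolume (n + 1))) →
      α ≤ 2 - Real.log π / Real.log 2) ∧
    (∀ β : ℝ, (∀ n : ℕ, 1 ≤ n →
        unitBallVolume n ^ 2 / (unitBallVolume (n - 1) * unitBallVolume (n + 1)) ≤
          (1 + 1 / (n : ℝ)) ^ β) →
      (1 : ℝ) / 2 ≤ β) := by
  have hmain : ∀ n : ℕ, 1 ≤ n →
      (1 + 1 / (n : ℝ)) ^ (2 - Real.log π / Real.log 2) ≤
        unitBallVolume n ^ 2 / (unitBallVolume (n - 1) * unitBallVolume (n + 1)) ∧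
      unitBallVolume n ^ 2 / (unitBallVolume (n - 1) * unitBallVolume (n + 1)) ≤
        (1 + 1 / (n : ℝ)) ^ ((1 : ℝ) / 2) := by
    intro n hn
    have hNR : (1:ℝ) ≤ (n:ℝ) := by exact_mod_cast hn
    have hNpos : (0:ℝ) < (n:ℝ) := by linarith
    have hr := rV n hn
    have hsp := hs_pos n
    have hL1 := L1 n hn
    have hRpos : (0:ℝ) < (((n:ℝ)+1)/2) / hs n := by positivity
    constructor
    · -- lower bound
      rw [hr]
      rcases eq_or_lt_of_le hn with h1 | h2
      · -- n = 1
        have hn1 : n = 1 := h1.symm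
        subst hn1
        rw [hs_one]
        norm_num
        rw [two_rpow_alpha]
      · rcases eq_or_lt_of_le (show 2 ≤ n by omega) with h2' | h3
        · -- n = 2
          have hn2 : n = 2 := h2'.symm
          subst hn2
          rw [hs_two]
          have hb : (1 + 1/(2:ℝ)) ^ (2 - Real.log π / Real.log 2) ≤
              1 + (2 - Real.log π / Real.log 2) * (1/2) :=
            rpow_one_add_le_one_add_mul_self (by norm_num) alpha_nonneg alpha_le_one
          refine hb.trans ?_
          have hπ := pi_gt_d6
          have hα := alpha_le
          norm_num
          linarith
        · -- n ≥ 3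
          have hn3 : 3 ≤ n := h3
          have hN3 : (3:ℝ) ≤ (n:ℝ) := by exact_mod_cast hn3
          have hb : (1 + 1/(n:ℝ)) ^ (2 - Real.log π / Real.log 2) ≤
              1 + (2 - Real.log π / Real.log 2) * (1/(n:ℝ)) :=
            rpow_one_add_le_one_add_mul_self
              (le_trans (by norm_num : (-1:ℝ) ≤ 0) (by positivity)) alpha_nonneg alpha_le_one
          refine hb.trans ?_
          have hub := L2' n hn3
          have hπu := pi_lt_d6
          have hπl := pi_gt_d6
          have hα := alpha_le
          have hα0 := alpha_nonneg
          have hdenpos : (0:ℝ) < (n:ℝ)/2 + π/4 - 1/2 := by nlinarith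
          have hstep : (((n:ℝ)+1)/2) / ((n:ℝ)/2 + π/4 - 1/2) ≤ (((n:ℝ)+1)/2) / hs n := by
            gcongr
          refine le_trans ?_ hstep
          rw [le_div_iff₀ hdenpos]
          set a := 2 - Real.log π / Real.log 2 with ha
          have expand : (1 + a * (1/(n:ℝ))) * ((n:ℝ)/2 + π/4 - 1/2) =
              ((n:ℝ)/2 + π/4 - 1/2) + a * ((n:ℝ)/2 + π/4 - 1/2) / n := by
            field_simp
          rw [expand]
          have hfrac : a * ((n:ℝ)/2 + π/4 - 1/2) / n ≤ a * (1/2 + (π/4 - 1/2)/3) := by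
            rw [div_le_iff₀ hNpos]
            have h1 : (π/4 - 1/2) ≥ 0 := by nlinarith
            nlinarith [mul_nonneg hα0 h1]
          nlinarith [hfrac]
    · -- upper bound
      rw [hr, ← Real.sqrt_eq_rpow]
      rw [Real.le_sqrt (by positivity) (by positivity)]
      have hq : (((n:ℝ)+1)/2) / hs n ≤ 2*((n:ℝ)+1)/(2*(n:ℝ)+1) := by
        rw [div_le_div_iff₀ hsp (by positivity)]
        nlinarith [hL1]
      have hsq : ((((n:ℝ)+1)/2) / hs n)^2 ≤ (2*((n:ℝ)+1)/(2*(n:ℝ)+1))^2 :=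
        pow_le_pow_left₀ (by positivity) hq 2
      refine hsq.trans ?_
      have e : 1 + 1/(n:ℝ) = ((n:ℝ)+1)/(n:ℝ) := by field_simp
      rw [e, div_pow, div_le_div_iff₀ (by positivity) hNpos]
      nlinarith
  refine ⟨hmain, ?_, ?_⟩
  · intro α hα
    have h1 := hα 1 le_rfl
    rw [rV 1 le_rfl, hs_one] at h1
    norm_num at h1
    have h2 : (2:ℝ)^α ≤ (2:ℝ)^(2 - Real.log π/Real.log 2) := by
      rw [two_rpow_alpha]
      convert h1 using 2 <;> norm_num
    exact (Real.rpow_le_rpow_left_iff (by norm_num : (1:ℝ) < 2)).1 h2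
  · intro β hβ
    have hβ0 : 0 < β := by
      by_contra hneg
      push_neg at hneg
      have h1 := hβ 1 le_rfl
      rw [rV 1 le_rfl, hs_one] at h1
      norm_num at h1
      have hle1 : (2:ℝ)^β ≤ 1 := Real.rpow_le_one_of_one_le_of_nonpos (by norm_num) hneg
      have hgt : (1:ℝ) < 4/π := by
        rw [lt_div_iff₀ pi_pos]
        nlinarith [pi_lt_four]
      have h1' : (4:ℝ)/π ≤ (2:ℝ)^β := by
        convert h1 using 2 <;> norm_num
      linarith
    have key : ∀ n : ℕ, 1 ≤ n → 1/2 - 2/(n:ℝ) ≤ β := by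
      intro n hn
      have hNR : (1:ℝ) ≤ (n:ℝ) := by exact_mod_cast hn
      have hNpos : (0:ℝ) < (n:ℝ) := by linarith
      have hsp := hs_pos n
      have hL2 := L2 n hn
      have h1 := hβ n hn
      rw [rV n hn] at h1
      have hden : (0:ℝ) < 4*(n:ℝ)^2+2*(n:ℝ)+1 := by positivity
      have hOnePlus : (1:ℝ) + (2*(n:ℝ)-1)/(4*(n:ℝ)^2+2*(n:ℝ)+1) =
          4*(n:ℝ)*((n:ℝ)+1)/(4*(n:ℝ)^2+2*(n:ℝ)+1) := by
        field_simp
        ring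
      have hub2 : hs n ≤ (4*(n:ℝ)^2+2*(n:ℝ)+1)/(8*(n:ℝ)) := by
        refine hL2.trans (le_of_eq ?_)
        rw [div_add_div _ _ (by norm_num : (4:ℝ) ≠ 0) (by positivity : 8*(n:ℝ) ≠ 0),
          div_eq_div_iff (by positivity) (by positivity)]
        ring
      have hrho : 4*(n:ℝ)*((n:ℝ)+1)/(4*(n:ℝ)^2+2*(n:ℝ)+1) ≤ (((n:ℝ)+1)/2)/hs n := by
        have e1 : (((n:ℝ)+1)/2)/((4*(n:ℝ)^2+2*(n:ℝ)+1)/(8*(n:ℝ))) =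
            4*(n:ℝ)*((n:ℝ)+1)/(4*(n:ℝ)^2+2*(n:ℝ)+1) := by
          rw [div_div_div_comm, div_eq_div_iff (by positivity) (by positivity)]
          field_simp
          ring
        rw [← e1]
        gcongr
      have hchain : 1 + (2*(n:ℝ)-1)/(4*(n:ℝ)^2+2*(n:ℝ)+1) ≤ (1+1/(n:ℝ))^β := by
        rw [hOnePlus]
        exact hrho.trans h1
      have hd0 : (0:ℝ) ≤ (2*(n:ℝ)-1)/(4*(n:ℝ)^2+2*(n:ℝ)+1) := div_nonneg (by linarith) hden.le
      have hpd : (0:ℝ) < 1 + (2*(n:ℝ)-1)/(4*(n:ℝ)^2+2*(n:ℝ)+1) := by linarith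
      have hlog1 : Real.log (1 + (2*(n:ℝ)-1)/(4*(n:ℝ)^2+2*(n:ℝ)+1)) ≤
          β * Real.log (1+1/(n:ℝ)) := by
        rw [← Real.log_rpow (show (0:ℝ) < 1+1/(n:ℝ) by positivity)]
        exact Real.log_le_log hpd hchain
      have hlow : 1 - (1 + (2*(n:ℝ)-1)/(4*(n:ℝ)^2+2*(n:ℝ)+1))⁻¹ ≤
          Real.log (1 + (2*(n:ℝ)-1)/(4*(n:ℝ)^2+2*(n:ℝ)+1)) := by
        have h := Real.log_le_sub_one_of_pos (inv_pos.2 hpd)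
        rw [Real.log_inv] at h
        linarith
      have hup : Real.log (1+1/(n:ℝ)) ≤ 1/(n:ℝ) := by
        have h := Real.log_le_sub_one_of_pos (show (0:ℝ) < 1+1/(n:ℝ) by positivity)
        linarith
      have hβn : β * Real.log (1+1/(n:ℝ)) ≤ β * (1/(n:ℝ)) :=
        mul_le_mul_of_nonneg_left hup hβ0.le
      have h44 : (0:ℝ) < 4*(n:ℝ)^2+4*(n:ℝ) := by positivity
      have hinv : (1 + (2*(n:ℝ)-1)/(4*(n:ℝ)^2+2*(n:ℝ)+1))⁻¹ =
          (4*(n:ℝ)^2+2*(n:ℝ)+1)/(4*(n:ℝ)^2+4*(n:ℝ)) := by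
        rw [hOnePlus, inv_div]
        rw [show 4*(n:ℝ)*((n:ℝ)+1) = 4*(n:ℝ)^2+4*(n:ℝ) from by ring]
      have hcomb : 1 - (4*(n:ℝ)^2+2*(n:ℝ)+1)/(4*(n:ℝ)^2+4*(n:ℝ)) ≤ β * (1/(n:ℝ)) := by
        rw [← hinv]
        linarith [hlow, hlog1, hβn]
      have hval : 1 - (4*(n:ℝ)^2+2*(n:ℝ)+1)/(4*(n:ℝ)^2+4*(n:ℝ)) =
          (2*(n:ℝ)-1)/(4*(n:ℝ)^2+4*(n:ℝ)) := by
        field_simp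
        ring
      have hm := mul_le_mul_of_nonneg_left hcomb hNpos.le
      have hβeq : (n:ℝ) * (β * (1/(n:ℝ))) = β := by
        field_simp
      rw [hβeq, hval] at hm
      have hx : 1/2 - 2/(n:ℝ) ≤ (n:ℝ) * ((2*(n:ℝ)-1)/(4*(n:ℝ)^2+4*(n:ℝ))) := by
        have e2 : 1/2 - 2/(n:ℝ) = ((n:ℝ)-4)/(2*(n:ℝ)) := by
          field_simp
          ring
        rw [e2, mul_div_assoc', div_le_div_iff₀ (by positivity) h44]
        nlinarith
      linarith [hx, hm]
    have ht : Tendsto (fun n : ℕ => 1/2 - 2/(n:ℝ)) atTop (𝓝 (1/2)) := by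
      have h0 : Tendsto (fun n : ℕ => 2/(n:ℝ)) atTop (𝓝 0) :=
        Tendsto.div_atTop tendsto_const_nhds tendsto_natCast_atTop_atTop
      simpa using tendsto_const_nhds.sub h0
    exact le_of_tendsto ht (eventually_atTop.2 ⟨1, fun n hn => key n hn⟩)
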